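/- Let (X, μ) and (Y, ν) be σ-finite measure spaces, ρ_A⁰ a probability density on (X, μ) and ρ_B⁰ a probability density on (Y, ν), each with integrable ρ·log ρ. Let Φ : X × Y → X × Y be a measurable bijection with measurable inverse such that both Φ and Φ⁻¹ preserve the measure μ ⊗ ν, and let ρ₁ = (ρ_A⁰ ⊗ ρ_B⁰) ∘ Φ⁻¹ be the evolved joint density, with marginals ρ_A¹, ρ_B¹ whose ρ·log ρ are integrable. Then S[ρ_A¹] + S[ρ_B¹] ≥ S[ρ_A⁰] + S[ρ_B⁰]. -/

import Mathlib

open MeasureTheory Real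

/-- A nonnegative function with integral 1 is integrable. -/
private lemma my_integrable_of_integral_eq_one {Ω : Type*} [MeasurableSpace Ω] {m : Measure Ω}
    {f : Ω → ℝ} (h : ∫ ω, f ω ∂m = 1) : Integrable f m := by
  by_contra hc
  rw [integral_undef hc] at h
  norm_num at h

/-- Gibbs' inequality: the cross entropy dominates the entropy. -/
private lemma gibbs_aux {Ω : Type*} [MeasurableSpace Ω] (m : Measure Ω)
    (p q : Ω → ℝ) (hp0 : ∀ ω, 0 ≤ p ω) (hq0 : ∀ ω, 0 ≤ q ω)
    (hpq : ∀ᵐ ω ∂m, q ω = 0 → p ω = 0)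
    (hpi : Integrable p m) (hqi : Integrable q m)
    (hplp : Integrable (fun ω => p ω * log (p ω)) m)
    (hplq : Integrable (fun ω => p ω * log (q ω)) m)
    (hip : ∫ ω, p ω ∂m = 1) (hiq : ∫ ω, q ω ∂m = 1) :
    ∫ ω, p ω * log (q ω) ∂m ≤ ∫ ω, p ω * log (p ω) ∂m := by
  have key : ∀ᵐ ω ∂m, p ω * log (q ω) - p ω * log (p ω) ≤ q ω - p ω := by
    filter_upwards [hpq] with ω h
    rcases eq_or_lt_of_le (hp0 ω) with hp | hp
    · simp only [← hp, zero_mul, sub_zero, sub_self]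
      simpa using hq0 ω
    · have hq : 0 < q ω := by
        rcases eq_or_lt_of_le (hq0 ω) with hq | hq
        · exact absurd (h hq.symm) (ne_of_gt hp)
        · exact hq
      have hlog := Real.log_le_sub_one_of_pos (show (0:ℝ) < q ω / p ω from div_pos hq hp)
      have h1 : p ω * log (q ω) - p ω * log (p ω) = p ω * log (q ω / p ω) := by
        rw [log_div hq.ne' hp.ne', mul_sub]
      rw [h1]
      have h2 : p ω * log (q ω / p ω) ≤ p ω * (q ω / p ω - 1) := by
        exact mul_le_mul_of_nonneg_left hlog (le_of_lt hp)
      have h3 : p ω * (q ω / p ω - 1) = q ω - p ω := by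
        field_simp
      linarith
  have h1 : ∫ ω, (p ω * log (q ω) - p ω * log (p ω)) ∂m ≤ ∫ ω, (q ω - p ω) ∂m :=
    integral_mono_ae (hplq.sub hplp) (hqi.sub hpi) key
  rw [integral_sub hplq hplp, integral_sub hqi hpi, hip, hiq] at h1
  linarith

/-- Measure-preserving evolution of an initially independent joint density
cannot decrease the sum of the marginal Gibbs entropies:
`S[ρ_A¹] + S[ρ_B¹] ≥ S[ρ_A⁰] + S[ρ_B⁰]`. -/
theorem marginal_entropy_sum_nondecreasing
    {X Y : Type*} [MeasurableSpace X] [MeasurableSpace Y]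
    (μ : Measure X) (ν : Measure Y) [SigmaFinite μ] [SigmaFinite ν]
    (ρA0 : X → ℝ) (hρA0m : Measurable ρA0) (hρA00 : ∀ x, 0 ≤ ρA0 x)
    (hρA01 : ∫ x, ρA0 x ∂μ = 1)
    (hentA0 : Integrable (fun x => ρA0 x * log (ρA0 x)) μ)
    (ρB0 : Y → ℝ) (hρB0m : Measurable ρB0) (hρB00 : ∀ y, 0 ≤ ρB0 y)
    (hρB01 : ∫ y, ρB0 y ∂ν = 1)
    (hentB0 : Integrable (fun y => ρB0 y * log (ρB0 y)) ν)
    (Φ : X × Y ≃ᵐ X × Y)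
    (hΦ : MeasurePreserving Φ (μ.prod ν) (μ.prod ν))
    (hΦinv : MeasurePreserving Φ.symm (μ.prod ν) (μ.prod ν))
    (ρ1 : X × Y → ℝ)
    (hρ1def : ρ1 = (fun p : X × Y => ρA0 p.1 * ρB0 p.2) ∘ Φ.symm)
    (ρA1 : X → ℝ) (hρA1 : ∀ x, ρA1 x = ∫ y, ρ1 (x, y) ∂ν)
    (ρB1 : Y → ℝ) (hρB1 : ∀ y, ρB1 y = ∫ x, ρ1 (x, y) ∂μ)
    (hentA1 : Integrable (fun x => ρA1 x * log (ρA1 x)) μ)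
    (hentB1 : Integrable (fun y => ρB1 y * log (ρB1 y)) ν) :
    -(∫ x, ρA1 x * log (ρA1 x) ∂μ) + -(∫ y, ρB1 y * log (ρB1 y) ∂ν) ≥
      -(∫ x, ρA0 x * log (ρA0 x) ∂μ) + -(∫ y, ρB0 y * log (ρB0 y) ∂ν) := by
  set m : Measure (X × Y) := μ.prod ν with hm
  set f : X × Y → ℝ := fun z => ρA0 z.1 * ρB0 z.2 with hf
  -- basic integrability of initial densities
  have intA0 : Integrable ρA0 μ := my_integrable_of_integral_eq_one hρA01
  have intB0 : Integrable ρB0 ν := my_integrable_of_integral_eq_one hρB01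
  have hfm : Measurable f := (hρA0m.comp measurable_fst).mul (hρB0m.comp measurable_snd)
  have hfi : Integrable f m := intA0.mul_prod intB0
  have hemb : MeasurableEmbedding (Φ.symm : X × Y → X × Y) := Φ.symm.measurableEmbedding
  -- ρ1 basics
  have hρ1m : Measurable ρ1 := by rw [hρ1def]; exact hfm.comp Φ.symm.measurable
  have hρ10 : ∀ z, 0 ≤ ρ1 z := by
    intro z; rw [hρ1def]; exact mul_nonneg (hρA00 _) (hρB00 _)
  have hρ1i : Integrable ρ1 m := by
    rw [hρ1def]; exact (hΦinv.integrable_comp_emb hemb).mpr hfi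
  have hρ1int : ∫ z, ρ1 z ∂m = 1 := by
    rw [hρ1def]
    have := hΦinv.integral_comp hemb f
    rw [show ((f ∘ Φ.symm) : X × Y → ℝ) = fun z => f (Φ.symm z) from rfl, this,
      hf, integral_prod_mul, hρA01, hρB01]
    norm_num
  -- marginal basics
  have hρA1nn : ∀ x, 0 ≤ ρA1 x := by
    intro x; rw [hρA1]; exact integral_nonneg fun y => hρ10 _
  have hρB1nn : ∀ y, 0 ≤ ρB1 y := by
    intro y; rw [hρB1]; exact integral_nonneg fun x => hρ10 _
  have hρA1m : Measurable ρA1 := by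
    have h : Measurable fun x => ∫ y, ρ1 (x, y) ∂ν :=
      (hρ1m.stronglyMeasurable.integral_prod_right').measurable
    rw [show ρA1 = fun x => ∫ y, ρ1 (x, y) ∂ν from funext hρA1]
    exact h
  have hρB1m : Measurable ρB1 := by
    have hsw : Measurable (fun z : Y × X => ρ1 (z.2, z.1)) := hρ1m.comp measurable_swap
    have h : Measurable fun y => ∫ x, ρ1 (x, y) ∂μ :=
      (hsw.stronglyMeasurable.integral_prod_right').measurable
    rw [show ρB1 = fun y => ∫ x, ρ1 (x, y) ∂μ from funext hρB1]
    exact h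
  have intA1 : Integrable ρA1 μ := by
    have := hρ1i.integral_prod_left
    exact this.congr (Filter.Eventually.of_forall fun x => (hρA1 x).symm)
  have intB1 : Integrable ρB1 ν := by
    have := hρ1i.integral_prod_right
    exact this.congr (Filter.Eventually.of_forall fun y => (hρB1 y).symm)
  have hρA1int : ∫ x, ρA1 x ∂μ = 1 := by
    rw [show (fun x => ρA1 x) = fun x => ∫ y, ρ1 (x, y) ∂ν from funext hρA1]
    rw [← integral_prod _ hρ1i, hρ1int]
  have hρB1int : ∫ y, ρB1 y ∂ν = 1 := by
    rw [show (fun y => ρB1 y) = fun y => ∫ x, ρ1 (x, y) ∂μ from funext hρB1]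
    rw [← integral_prod_symm _ hρ1i, hρ1int]
  -- entropy of the joint density equals the sum of initial entropies
  have hflf : (fun z : X × Y => f z * log (f z)) =
      fun z => (ρA0 z.1 * log (ρA0 z.1)) * ρB0 z.2 + ρA0 z.1 * (ρB0 z.2 * log (ρB0 z.2)) := by
    funext z
    rcases eq_or_lt_of_le (hρA00 z.1) with ha | ha
    · simp [hf, ← ha]
    · rcases eq_or_lt_of_le (hρB00 z.2) with hb | hb
      · simp [hf, ← hb]
      · simp only [hf]
        rw [Real.log_mul ha.ne' hb.ne']
        ring
  have hflfi : Integrable (fun z : X × Y => f z * log (f z)) m := by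
    rw [hflf]
    exact (hentA0.mul_prod intB0).add (intA0.mul_prod hentB0)
  have hplpi : Integrable (fun z => ρ1 z * log (ρ1 z)) m := by
    rw [hρ1def]
    exact (hΦinv.integrable_comp_emb hemb).mpr hflfi
  have hjoint : ∫ z, ρ1 z * log (ρ1 z) ∂m =
      (∫ x, ρA0 x * log (ρA0 x) ∂μ) + ∫ y, ρB0 y * log (ρB0 y) ∂ν := by
    have h1 : ∫ z, ρ1 z * log (ρ1 z) ∂m = ∫ z, f z * log (f z) ∂m := by
      rw [hρ1def]
      exact hΦinv.integral_comp hemb (fun z => f z * log (f z))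
    have e1 := integral_prod_mul (μ := μ) (ν := ν) (fun x => ρA0 x * log (ρA0 x)) ρB0
    have e2 := integral_prod_mul (μ := μ) (ν := ν) ρA0 (fun y => ρB0 y * log (ρB0 y))
    rw [h1, hflf, integral_add (hentA0.mul_prod intB0) (intA0.mul_prod hentB0),
      e1, e2, hρA01, hρB01]
    ring
  -- the null-set facts: where a marginal vanishes, ρ1 vanishes a.e.
  have hNA : ∀ᵐ z ∂m, ρA1 z.1 = 0 → ρ1 z = 0 := by
    have hset : MeasurableSet {z : X × Y | ρA1 z.1 = 0 → ρ1 z = 0} := by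
      have : {z : X × Y | ρA1 z.1 = 0 → ρ1 z = 0} =
          {z : X × Y | ρA1 z.1 = 0}ᶜ ∪ {z | ρ1 z = 0} := by
        ext z; simp [imp_iff_not_or]
      rw [this]
      exact ((hρA1m.comp measurable_fst) (measurableSet_singleton 0)).compl.union
        (hρ1m (measurableSet_singleton 0))
    rw [hm, Measure.ae_prod_iff_ae_ae hset]
    filter_upwards [hρ1i.prod_right_ae] with x hx
    by_cases h : ρA1 x = 0
    · have h0 : ∫ y, ρ1 (x, y) ∂ν = 0 := by rw [← hρA1 x, h]
      have := (integral_eq_zero_iff_of_nonneg (fun y => hρ10 (x, y)) hx).mp h0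
      filter_upwards [this] with y hy
      intro _; exact hy
    · filter_upwards with y hy; exact absurd hy h
  have hNB : ∀ᵐ z ∂m, ρB1 z.2 = 0 → ρ1 z = 0 := by
    -- work in the swapped product
    have hsw : Integrable (fun w : Y × X => ρ1 (w.2, w.1)) (ν.prod μ) := by
      have := hρ1i.swap
      exact this
    have hset : MeasurableSet {w : Y × X | ρB1 w.1 = 0 → ρ1 (w.2, w.1) = 0} := by
      have : {w : Y × X | ρB1 w.1 = 0 → ρ1 (w.2, w.1) = 0} =
          {w : Y × X | ρB1 w.1 = 0}ᶜ ∪ {w | ρ1 (w.2, w.1) = 0} := by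
        ext w; simp [imp_iff_not_or]
      rw [this]
      exact ((hρB1m.comp measurable_fst) (measurableSet_singleton 0)).compl.union
        ((hρ1m.comp measurable_swap) (measurableSet_singleton 0))
    have hswap : ∀ᵐ w ∂(ν.prod μ), ρB1 w.1 = 0 → ρ1 (w.2, w.1) = 0 := by
      rw [Measure.ae_prod_iff_ae_ae hset]
      filter_upwards [hsw.prod_right_ae] with y hy
      by_cases h : ρB1 y = 0
      · have h0 : ∫ x, ρ1 (x, y) ∂μ = 0 := by rw [← hρB1 y, h]
        have := (integral_eq_zero_iff_of_nonneg (fun x => hρ10 (x, y)) hy).mp h0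
        filter_upwards [this] with x hx
        intro _; exact hx
      · filter_upwards with x hx; exact absurd hx h
    have hsetXY : MeasurableSet {z : X × Y | ρB1 z.2 = 0 → ρ1 z = 0} := by
      have : {z : X × Y | ρB1 z.2 = 0 → ρ1 z = 0} =
          {z : X × Y | ρB1 z.2 = 0}ᶜ ∪ {z | ρ1 z = 0} := by
        ext z; simp [imp_iff_not_or]
      rw [this]
      exact ((hρB1m.comp measurable_snd) (measurableSet_singleton 0)).compl.union
        (hρ1m (measurableSet_singleton 0))
    have hmap : m = Measure.map Prod.swap (ν.prod μ) := by
      rw [Measure.prod_swap]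
    rw [hmap, ae_map_iff measurable_swap.aemeasurable hsetXY]
    exact hswap
  -- cross terms: ∫ ρ1 · log(ρA1 ∘ fst) and ∫ ρ1 · log(ρB1 ∘ snd)
  have hqAi : Integrable (fun z : X × Y => ρ1 z * log (ρA1 z.1)) m := by
    have hmeas : AEStronglyMeasurable (fun z : X × Y => ρ1 z * log (ρA1 z.1)) m :=
      (hρ1m.mul (Real.measurable_log.comp (hρA1m.comp measurable_fst))).aestronglyMeasurable
    rw [hm, integrable_prod_iff hmeas]
    constructor
    · filter_upwards [hρ1i.prod_right_ae] with x hx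
      exact hx.mul_const _
    · have heq : (fun x => ∫ y, ‖ρ1 (x, y) * log (ρA1 x)‖ ∂ν) =
          fun x => |ρA1 x * log (ρA1 x)| := by
        funext x
        have : ∀ y, ‖ρ1 (x, y) * log (ρA1 x)‖ = |log (ρA1 x)| * ρ1 (x, y) := by
          intro y
          rw [Real.norm_eq_abs, abs_mul, abs_of_nonneg (hρ10 (x, y))]
          ring
        simp_rw [this]
        rw [integral_const_mul, ← hρA1 x, abs_mul, abs_of_nonneg (hρA1nn x)]
        ring
      rw [heq]
      exact hentA1.abs
  have hqBi : Integrable (fun z : X × Y => ρ1 z * log (ρB1 z.2)) m := by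
    have hmeas : AEStronglyMeasurable (fun z : X × Y => ρ1 z * log (ρB1 z.2)) m :=
      (hρ1m.mul (Real.measurable_log.comp (hρB1m.comp measurable_snd))).aestronglyMeasurable
    rw [hm, integrable_prod_iff' hmeas]
    constructor
    · filter_upwards [hρ1i.prod_left_ae] with y hy
      exact hy.mul_const _
    · have heq : (fun y => ∫ x, ‖ρ1 (x, y) * log (ρB1 y)‖ ∂μ) =
          fun y => |ρB1 y * log (ρB1 y)| := by
        funext y
        have : ∀ x, ‖ρ1 (x, y) * log (ρB1 y)‖ = |log (ρB1 y)| * ρ1 (x, y) := by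
          intro x
          rw [Real.norm_eq_abs, abs_mul, abs_of_nonneg (hρ10 (x, y))]
          ring
        simp_rw [this]
        rw [integral_const_mul, ← hρB1 y, abs_mul, abs_of_nonneg (hρB1nn y)]
        ring
      rw [heq]
      exact hentB1.abs
  have hqAint : ∫ z, ρ1 z * log (ρA1 z.1) ∂m = ∫ x, ρA1 x * log (ρA1 x) ∂μ := by
    rw [hm, integral_prod _ hqAi]
    congr 1
    funext x
    show ∫ y, ρ1 (x, y) * log (ρA1 x) ∂ν = ρA1 x * log (ρA1 x)
    rw [integral_mul_const, ← hρA1 x]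
  have hqBint : ∫ z, ρ1 z * log (ρB1 z.2) ∂m = ∫ y, ρB1 y * log (ρB1 y) ∂ν := by
    rw [hm, integral_prod_symm _ hqBi]
    congr 1
    funext y
    show ∫ x, ρ1 (x, y) * log (ρB1 y) ∂μ = ρB1 y * log (ρB1 y)
    rw [integral_mul_const, ← hρB1 y]
  -- the product of marginals q
  set q : X × Y → ℝ := fun z => ρA1 z.1 * ρB1 z.2 with hq
  have hq0 : ∀ z, 0 ≤ q z := fun z => mul_nonneg (hρA1nn _) (hρB1nn _)
  have hqi : Integrable q m := intA1.mul_prod intB1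
  have hqint : ∫ z, q z ∂m = 1 := by
    rw [hq, hm, integral_prod_mul, hρA1int, hρB1int]; norm_num
  -- a.e. splitting of ρ1 · log q
  have hsplit : (fun z => ρ1 z * log (q z)) =ᵐ[m]
      fun z => ρ1 z * log (ρA1 z.1) + ρ1 z * log (ρB1 z.2) := by
    filter_upwards [hNA, hNB] with z hA hB
    rcases eq_or_lt_of_le (hρA1nn z.1) with ha | ha
    · rw [hA ha.symm]; ring
    · rcases eq_or_lt_of_le (hρB1nn z.2) with hb | hb
      · rw [hB hb.symm]; ring
      · rw [hq]
        simp only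
        rw [Real.log_mul ha.ne' hb.ne']
        ring
  have hplqi : Integrable (fun z => ρ1 z * log (q z)) m :=
    (hqAi.add hqBi).congr hsplit.symm
  have hplqint : ∫ z, ρ1 z * log (q z) ∂m =
      (∫ x, ρA1 x * log (ρA1 x) ∂μ) + ∫ y, ρB1 y * log (ρB1 y) ∂ν := by
    rw [integral_congr_ae hsplit, integral_add hqAi hqBi, hqAint, hqBint]
  -- q = 0 → ρ1 = 0 a.e.
  have hpq : ∀ᵐ z ∂m, q z = 0 → ρ1 z = 0 := by
    filter_upwards [hNA, hNB] with z hA hB hz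
    rcases mul_eq_zero.mp hz with h | h
    · exact hA h
    · exact hB h
  -- Gibbs' inequality
  have hgibbs := gibbs_aux m ρ1 q hρ10 hq0 hpq hρ1i hqi hplpi hplqi hρ1int hqint
  rw [hplqint, hjoint] at hgibbs
  linarith
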